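/- Let φ(y) = 2·(2^(y/2) − 1). There exists a function Φ : ℝ → ℝ such that for every real y < 2 the sequence φ^[k](y) / (log 2)^k converges to Φ(y) as k → ∞, and Φ satisfies Schröder's equation Φ(φ(y)) = (log 2)·Φ(y) for every y < 2. -/

import Mathlib

open Real Filter Function Topology

local notation "L" => Real.log 2

noncomputable def phi : ℝ → ℝ := fun t => 2 * ((2 : ℝ) ^ (t / 2) - 1)

lemma phi_eq (t : ℝ) : phi t = 2 * (Real.exp (L * (t / 2)) - 1) := by
  simp only [phi]
  rw [Real.rpow_def_of_pos (by norm_num : (0:ℝ) < 2)]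

lemma L_pos : 0 < L := Real.log_pos (by norm_num)
lemma L_lt : L < 0.6931471808 := Real.log_two_lt_d9
lemma L_gt : 0.6931471803 < L := Real.log_two_gt_d9

lemma abs_phi_sub_le {x : ℝ} (hx : |x| ≤ 2) : |phi x - L * x| ≤ x ^ 2 / 4 := by
  have habs : |x| ^ 2 = x ^ 2 := sq_abs x
  have ht : |L * (x / 2)| ≤ 1 := by
    rw [abs_mul, abs_of_pos L_pos, abs_div]
    rw [abs_of_pos (by norm_num : (0:ℝ) < 2)]
    nlinarith [L_lt, L_pos, abs_nonneg x]
  have hb := Real.exp_bound ht (by norm_num : 0 < 2)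
  have hsum : ∑ m ∈ Finset.range 2, (L * (x / 2)) ^ m / (m.factorial : ℝ)
      = 1 + L * (x / 2) := by
    simp [Finset.sum_range_succ]
  rw [hsum] at hb
  have key : phi x - L * x = 2 * (Real.exp (L * (x / 2)) - (1 + L * (x / 2))) := by
    rw [phi_eq]; ring
  rw [key, abs_mul, abs_of_pos (by norm_num : (0:ℝ) < 2)]
  have h2 : |L * (x / 2)| ^ 2 * ((2 + 1 : ℕ) / ((2:ℕ).factorial * (2:ℕ)) : ℝ)
      = (L^2 * x^2 / 4) * (3/4) := by
    rw [abs_mul, abs_of_pos L_pos, abs_div, abs_of_pos (by norm_num : (0:ℝ) < 2)]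
    simp [Nat.factorial]
    rw [← sq_abs x]
    ring
  have hb2 : |Real.exp (L * (x / 2)) - (1 + L * (x / 2))| ≤ (L^2 * x^2 / 4) * (3/4) := by
    calc |Real.exp (L * (x / 2)) - (1 + L * (x / 2))|
        ≤ |L * (x / 2)| ^ 2 * ((2 + 1 : ℕ) / ((2:ℕ).factorial * (2:ℕ)) : ℝ) := by
          simpa using hb
      _ = (L^2 * x^2 / 4) * (3/4) := h2
  have hL2 : L^2 ≤ (0.6931471808:ℝ)^2 := by nlinarith [L_lt, L_pos]
  nlinarith [hb2, hL2, sq_nonneg x]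

lemma phi_lt_two {x : ℝ} (hx : x < 2) : phi x < 2 := by
  rw [phi_eq]
  have h : L * (x / 2) < L := by nlinarith [L_pos]
  have : Real.exp (L * (x / 2)) < 2 :=
    calc Real.exp (L * (x / 2)) < Real.exp L := Real.exp_lt_exp.2 h
      _ = 2 := Real.exp_log (by norm_num)
  linarith

lemma L_mul_le_phi (x : ℝ) : L * x ≤ phi x := by
  rw [phi_eq]
  have := Real.add_one_le_exp (L * (x / 2))
  linarith

lemma phi_nonpos {x : ℝ} (hx : x ≤ 0) : phi x ≤ 0 := by
  rw [phi_eq]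
  have : Real.exp (L * (x / 2)) ≤ 1 := by
    rw [Real.exp_le_one_iff]
    nlinarith [L_pos]
  linarith

lemma phi_nonneg {x : ℝ} (hx : 0 ≤ x) : 0 ≤ phi x := by
  rw [phi_eq]
  have : 1 ≤ Real.exp (L * (x / 2)) := Real.one_le_exp (by nlinarith [L_pos])
  linarith

lemma phi_le_self {x : ℝ} (h0 : 0 ≤ x) (h2 : x ≤ 2) : phi x ≤ x := by
  have hc := convexOn_exp.2 (Set.mem_univ (0:ℝ)) (Set.mem_univ L)
    (by linarith : (0:ℝ) ≤ 1 - x/2) (by linarith : (0:ℝ) ≤ x/2) (by ring)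
  simp only [smul_eq_mul, mul_zero, zero_add, Real.exp_zero, mul_one,
    Real.exp_log (by norm_num : (0:ℝ) < 2)] at hc
  rw [phi_eq]
  have : (x/2) * L = L * (x/2) := mul_comm _ _
  rw [this] at hc
  linarith

lemma phi_lt_self {x : ℝ} (h0 : 0 < x) (h2 : x < 2) : phi x < x := by
  have hc := strictConvexOn_exp.2 (Set.mem_univ (0:ℝ)) (Set.mem_univ L)
    (ne_of_lt L_pos) (by linarith : (0:ℝ) < 1 - x/2) (by linarith : (0:ℝ) < x/2) (by ring)
  simp only [smul_eq_mul, mul_zero, zero_add, Real.exp_zero, mul_one,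
    Real.exp_log (by norm_num : (0:ℝ) < 2)] at hc
  rw [phi_eq]
  have : (x/2) * L = L * (x/2) := mul_comm _ _
  rw [this] at hc
  linarith

lemma phi_continuous : Continuous phi := by
  have : phi = fun t => 2 * (Real.exp (L * (t / 2)) - 1) := funext phi_eq
  rw [this]
  fun_prop

lemma orbit_lt_two {y : ℝ} (hy : y < 2) : ∀ k, phi^[k] y < 2 := by
  intro k
  induction k with
  | zero => simpa using hy
  | succ n ih => rw [Function.iterate_succ_apply']; exact phi_lt_two ih

lemma orbit_tendsto_zero {y : ℝ} (hy : y < 2) :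
    Tendsto (fun k => phi^[k] y) atTop (𝓝 0) := by
  set X : ℕ → ℝ := fun k => phi^[k] y with hX
  rcases le_or_gt y 0 with hneg | hpos
  · have hle : ∀ k, X k ≤ 0 ∧ -(L ^ k * |y|) ≤ X k := by
      intro k
      induction k with
      | zero =>
        refine ⟨by simpa [X] using hneg, ?_⟩
        have habsy : |y| = -y := abs_of_nonpos hneg
        simp [X, habsy]
      | succ n ih =>
        have h1 : X (n+1) = phi (X n) := by
          simp only [X, Function.iterate_succ_apply']
        constructor
        · rw [h1]; exact phi_nonpos ih.1
        · rw [h1]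
          have := L_mul_le_phi (X n)
          have h2 : L * (-(L ^ n * |y|)) ≤ L * X n :=
            mul_le_mul_of_nonneg_left ih.2 (le_of_lt L_pos)
          calc -(L ^ (n+1) * |y|) = L * (-(L ^ n * |y|)) := by ring
            _ ≤ L * X n := h2
            _ ≤ phi (X n) := this
    have hgeo : Tendsto (fun k => -(L ^ k * |y|)) atTop (𝓝 0) := by
      have := (tendsto_pow_atTop_nhds_zero_of_lt_one (le_of_lt L_pos)
        (by linarith [L_lt] : L < 1)).mul_const |y|
      simpa using this.neg
    exact tendsto_of_tendsto_of_tendsto_of_le_of_le hgeo tendsto_const_nhds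
      (fun k => (hle k).2) (fun k => (hle k).1)
  · have hnn : ∀ k, 0 ≤ X k := by
      intro k
      induction k with
      | zero => simpa [X] using le_of_lt hpos
      | succ n ih =>
        have h1 : X (n+1) = phi (X n) := by simp only [X, Function.iterate_succ_apply']
        rw [h1]; exact phi_nonneg ih
    have hanti : Antitone X := by
      apply antitone_nat_of_succ_le
      intro n
      have h1 : X (n+1) = phi (X n) := by simp only [X, Function.iterate_succ_apply']
      rw [h1]
      exact phi_le_self (hnn n) (le_of_lt (orbit_lt_two hy n))
    have hbdd : BddBelow (Set.range X) := ⟨0, fun z ⟨k, hk⟩ => hk ▸ hnn k⟩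
    have hconv := tendsto_atTop_ciInf hanti hbdd
    set l := ⨅ i, X i with hl
    have hl0 : 0 ≤ l := le_ciInf hnn
    have hl2 : l < 2 := lt_of_le_of_lt (ciInf_le hbdd 0) (by simpa [X] using hy)
    have hfix : phi l = l := by
      have h1 : Tendsto (fun k => X (k+1)) atTop (𝓝 l) :=
        hconv.comp (tendsto_add_atTop_nat 1)
      have h2 : Tendsto (fun k => phi (X k)) atTop (𝓝 (phi l)) :=
        (phi_continuous.continuousAt).tendsto.comp hconv
      have heq : (fun k => X (k+1)) = (fun k => phi (X k)) := by
        funext k; simp only [X, Function.iterate_succ_apply']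
      rw [heq] at h1
      exact tendsto_nhds_unique h2 h1
    have hlz : l = 0 := by
      rcases eq_or_lt_of_le hl0 with h | h
      · exact h.symm
      · exact absurd hfix (ne_of_lt (phi_lt_self h hl2))
    rwa [hlz] at hconv

lemma key_conv {y : ℝ} (hy : y < 2) :
    ∃ l, Tendsto (fun k => phi^[k] y / L ^ k) atTop (𝓝 l) := by
  set X : ℕ → ℝ := fun k => phi^[k] y with hX
  obtain ⟨N, hN⟩ : ∃ N, ∀ k ≥ N, |X k| ≤ 1/10 := by
    have := (Metric.tendsto_atTop.1 (orbit_tendsto_zero hy)) (1/10) (by norm_num)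
    obtain ⟨N, hN⟩ := this
    exact ⟨N, fun k hk => by
      have := hN k hk
      rw [Real.dist_eq, sub_zero] at this
      exact le_of_lt this⟩
  have hgeo : ∀ j, |X (N + j)| ≤ (3/4)^j * (1/10) := by
    intro j
    induction j with
    | zero => simpa using hN N (le_refl N)
    | succ n ih =>
      have hb1 : (3/4:ℝ)^n * (1/10) ≤ 1/10 := by
        have : (3/4:ℝ)^n ≤ 1 := pow_le_one₀ (by norm_num) (by norm_num)
        nlinarith
      have hsmall : |X (N + n)| ≤ 1/10 := le_trans ih hb1
      have h1 : X (N + (n+1)) = phi (X (N + n)) := by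
        simp only [X, ← Nat.add_assoc, Function.iterate_succ_apply']
      rw [h1]
      have hest := abs_phi_sub_le (le_trans hsmall (by norm_num) : |X (N+n)| ≤ 2)
      have habs : |phi (X (N+n))| ≤ L * |X (N+n)| + (X (N+n))^2 / 4 := by
        have h3 : |L * X (N+n)| = L * |X (N+n)| := by
          rw [abs_mul, abs_of_pos L_pos]
        calc |phi (X (N+n))| = |(phi (X (N+n)) - L * X (N+n)) + L * X (N+n)| := by
              congr 1; ring
          _ ≤ |phi (X (N+n)) - L * X (N+n)| + |L * X (N+n)| := abs_add_le _ _
          _ ≤ (X (N+n))^2 / 4 + L * |X (N+n)| := by rw [h3]; linarith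
          _ = L * |X (N+n)| + (X (N+n))^2 / 4 := by ring
      have hsq : (X (N+n))^2 = |X (N+n)|^2 := (sq_abs _).symm
      calc |phi (X (N+n))| ≤ L * |X (N+n)| + (X (N+n))^2 / 4 := habs
        _ ≤ (3/4) * |X (N+n)| := by
            rw [hsq]
            nlinarith [L_lt, abs_nonneg (X (N+n)), hsmall]
        _ ≤ (3/4) * ((3/4)^n * (1/10)) := by nlinarith [abs_nonneg (X (N+n))]
        _ = (3/4)^(n+1) * (1/10) := by ring
  have hLpow : ∀ k : ℕ, (0:ℝ) < L ^ k := fun k => pow_pos L_pos k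
  have hd : Summable (fun k => dist (X k / L^k) (X (k+1) / L^(k+1))) := by
    rw [← summable_nat_add_iff N]
    have hbound : ∀ j, dist (X (j + N) / L^(j + N)) (X (j + N + 1) / L^(j + N + 1))
        ≤ ((9/16)/L)^j * ((1/400) / L^(N+1)) := by
      intro j
      have h1 : X (j + N + 1) = phi (X (j + N)) := by
        simp only [X, Function.iterate_succ_apply']
      rw [Real.dist_eq, h1]
      have hkey : X (j+N) / L^(j+N) - phi (X (j+N)) / L^(j+N+1)
          = (L * X (j+N) - phi (X (j+N))) / L^(j+N+1) := by
        rw [pow_succ]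
        field_simp
      rw [hkey, abs_div, abs_of_pos (hLpow (j+N+1))]
      have hcomm : j + N = N + j := Nat.add_comm j N
      have hXsm : |X (j+N)| ≤ (3/4)^j * (1/10) := by rw [hcomm]; exact hgeo j
      have hest : |phi (X (j+N)) - L * X (j+N)| ≤ (X (j+N))^2 / 4 :=
        abs_phi_sub_le (le_trans hXsm (by
          have : (3/4:ℝ)^j ≤ 1 := pow_le_one₀ (by norm_num) (by norm_num)
          nlinarith))
      have hest' : |L * X (j+N) - phi (X (j+N))| ≤ (X (j+N))^2 / 4 := by
        rw [abs_sub_comm]; exact hest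
      have hsqb : (X (j+N))^2 ≤ (9/16)^j * (1/100) := by
        have hp : ((3/4:ℝ)^j) * ((3/4:ℝ)^j) = (9/16:ℝ)^j := by
          rw [← mul_pow]; norm_num
        have h5 : |X (j+N)| * |X (j+N)| ≤ ((3/4)^j * (1/10)) * ((3/4)^j * (1/10)) :=
          mul_le_mul hXsm hXsm (abs_nonneg _) (by positivity)
        have h6 : X (j+N)^2 = |X (j+N)| * |X (j+N)| := by
          rw [abs_mul_abs_self]; ring
        nlinarith [hp, h5, h6]
      have hLsplit : L^(j+N+1) = L^j * L^(N+1) := by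
        rw [← pow_add]; ring_nf
      calc |L * X (j+N) - phi (X (j+N))| / L^(j+N+1)
          ≤ ((9/16)^j * (1/100) / 4) / L^(j+N+1) := by
            gcongr
            linarith [hest', hsqb]
        _ = ((9/16)/L)^j * ((1/400) / L^(N+1)) := by
            rw [hLsplit, div_pow]
            have hL0 : L ≠ 0 := ne_of_gt L_pos
            field_simp
            ring_nf
            rw [← mul_pow, mul_inv_cancel₀ hL0, one_pow, one_mul, ← mul_pow]
            norm_num
    apply Summable.of_nonneg_of_le (fun j => dist_nonneg) hbound
    apply Summable.mul_right
    apply summable_geometric_of_lt_one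
    · positivity
    · rw [div_lt_one L_pos]
      linarith [L_gt]
  have hcauchy : CauchySeq (fun k => X k / L^k) := cauchySeq_of_summable_dist hd
  exact cauchySeq_tendsto_of_complete hcauchy

theorem schroeder_solution_for_conjugated_rpow :
    ∃ Φ : ℝ → ℝ,
      (∀ y : ℝ, y < 2 →
        Filter.Tendsto
          (fun k : ℕ => (fun t : ℝ => 2 * ((2 : ℝ) ^ (t / 2) - 1))^[k] y / (Real.log 2) ^ k)
          Filter.atTop (nhds (Φ y))) ∧
      (∀ y : ℝ, y < 2 → Φ (2 * ((2 : ℝ) ^ (y / 2) - 1)) = Real.log 2 * Φ y) := by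
  have hphi : (fun t : ℝ => 2 * ((2 : ℝ) ^ (t / 2) - 1)) = phi := rfl
  refine ⟨fun y => limUnder atTop (fun k : ℕ => phi^[k] y / L ^ k), ?_, ?_⟩
  · intro y hy
    obtain ⟨l, hl⟩ := key_conv hy
    rw [hphi]
    have hval : (fun y => limUnder atTop fun k : ℕ => phi^[k] y / L ^ k) y = l :=
      hl.limUnder_eq
    rw [hval]
    exact hl
  · intro y hy
    show limUnder atTop (fun k : ℕ => phi^[k] (phi y) / L ^ k)
        = L * limUnder atTop (fun k : ℕ => phi^[k] y / L ^ k)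
    obtain ⟨l, hl⟩ := key_conv hy
    have hpy : phi y < 2 := phi_lt_two hy
    obtain ⟨m, hm⟩ := key_conv hpy
    have hshift : Tendsto (fun k => phi^[k+1] y / L ^ (k+1)) atTop (𝓝 l) :=
      hl.comp (tendsto_add_atTop_nat 1)
    have h1 : Tendsto (fun k => phi^[k] (phi y) / L ^ k) atTop (𝓝 (L * l)) := by
      have h2 := hshift.const_mul L
      have hL0 : L ≠ 0 := ne_of_gt L_pos
      have heq : (fun k => L * (phi^[k+1] y / L ^ (k+1))) = fun k => phi^[k] (phi y) / L ^ k := by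
        funext k
        rw [Function.iterate_succ_apply, pow_succ]
        field_simp
      rwa [heq] at h2
    have hm' : m = L * l := tendsto_nhds_unique hm h1
    rw [hm.limUnder_eq, hl.limUnder_eq, hm']
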